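/- Let 0 < c₀ < 1/2 and let u : ℝ → (0,∞) be a C¹ solution of u' = (u² − u⁴ − c₀²)/(√2·√(u⁴ + c₀²)). Then the function ũ(x) = c₀/u(−x) is also a solution of the same ODE. -/

import Mathlib

theorem stmt_7 (c₀ : ℝ) (hc : 0 < c₀) (hc' : c₀ < 1 / 2)
    (u : ℝ → ℝ) (hpos : ∀ x, 0 < u x)
    (hode : ∀ x, HasDerivAt u
      (((u x) ^ 2 - (u x) ^ 4 - c₀ ^ 2) /
        (Real.sqrt 2 * Real.sqrt ((u x) ^ 4 + c₀ ^ 2))) x) :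
    ∀ x, HasDerivAt (fun y => c₀ / u (-y))
      (((c₀ / u (-x)) ^ 2 - (c₀ / u (-x)) ^ 4 - c₀ ^ 2) /
        (Real.sqrt 2 * Real.sqrt ((c₀ / u (-x)) ^ 4 + c₀ ^ 2))) x := by
  intro x
  set v := u (-x) with hv
  have hvpos : 0 < v := hpos (-x)
  have hvne : v ≠ 0 := ne_of_gt hvpos
  have hcne : c₀ ≠ 0 := ne_of_gt hc
  have hSpos : 0 < Real.sqrt (v ^ 4 + c₀ ^ 2) := by
    apply Real.sqrt_pos.mpr; positivity
  have hSne : Real.sqrt (v ^ 4 + c₀ ^ 2) ≠ 0 := ne_of_gt hSpos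
  have h2pos : (0:ℝ) < Real.sqrt 2 := by positivity
  have h2ne : Real.sqrt 2 ≠ 0 := ne_of_gt h2pos
  -- derivative of inner: u(-y)
  have hneg : HasDerivAt (fun y : ℝ => -y) (-1 : ℝ) x := by
    exact (hasDerivAt_id x).neg
  have hinner : HasDerivAt (fun y => u (-y))
      (-(((v) ^ 2 - (v) ^ 4 - c₀ ^ 2) /
        (Real.sqrt 2 * Real.sqrt ((v) ^ 4 + c₀ ^ 2)))) x := by
    have := (hode (-x)).comp x hneg
    simpa [hv, mul_comm, Function.comp_def] using this
  have hdiv : HasDerivAt (fun y => c₀ / u (-y))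
      ((0 * v - c₀ * (-(((v) ^ 2 - (v) ^ 4 - c₀ ^ 2) /
        (Real.sqrt 2 * Real.sqrt ((v) ^ 4 + c₀ ^ 2))))) / v ^ 2) x := by
    exact (hasDerivAt_const x c₀).div hinner hvne
  convert hdiv using 1
  -- key sqrt identity
  have hsq : Real.sqrt ((c₀ / v) ^ 4 + c₀ ^ 2)
      = c₀ * Real.sqrt (v ^ 4 + c₀ ^ 2) / v ^ 2 := by
    have h1 : (c₀ / v) ^ 4 + c₀ ^ 2 = (c₀ / v ^ 2) ^ 2 * (v ^ 4 + c₀ ^ 2) := by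
      field_simp; ring
    rw [h1, Real.sqrt_mul (by positivity), Real.sqrt_sq (by positivity)]
    ring
  rw [hsq]
  field_simp
  ring
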